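/- arXiv:1310.1970 — 2 statements merged into one kernel-verified Lean document; each statement's English description precedes it below -/
import Mathlib

section
/- (Multi-letter subadditivity of the Holevo quantity.) Let l ∈ ℕ, let W_1, …, W_l be cq-channels W_i : X → S(K_i) with the same finite input alphabet X and finite-dimensional output spaces K_i, and let p be a probability distribution on X^l with single-letter marginals p_i(x) = ∑_{x^l : x_i = x} p(x^l). Define χ(X^l; Q_1⋯Q_l) = S(∑_{x^l} p(x^l) W_1(x_1) ⊗ ⋯ ⊗ W_l(x_l)) - ∑_{x^l} p(x^l) S(W_1(x_1) ⊗ ⋯ ⊗ W_l(x_l)). Then χ(X^l; Q_1⋯Q_l) ≤ ∑_{i=1}^{l} χ(p_i, W_i). -/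
open scoped BigOperators Kronecker ComplexOrder
open Matrix Filter

noncomputable section

/-- `p` is a probability distribution on the finite type `Z`. -/
def IsProb {Z : Type*} [Fintype Z] (p : Z → ℝ) : Prop :=
  (∀ z, 0 ≤ p z) ∧ ∑ z, p z = 1

/-- `ρ` is a quantum state (density operator): positive semidefinite with trace 1. -/
def IsState {n : Type*} [Fintype n] (ρ : Matrix n n ℂ) : Prop :=
  ρ.PosSemidef ∧ ρ.trace = 1

/-- von Neumann entropy (base-2 logarithm), computed from the eigenvalues. -/
def vN {n : Type*} [Fintype n] [DecidableEq n] (ρ : Matrix n n ℂ) : ℝ :=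
  if h : ρ.IsHermitian then -∑ i, h.eigenvalues i * Real.logb 2 (h.eigenvalues i) else 0

/-- The Holevo quantity χ(q, T) of a cq-channel `T` with input distribution `q`. -/
def holevo {Z : Type*} [Fintype Z] {n : Type*} [Fintype n] [DecidableEq n]
    (q : Z → ℝ) (T : Z → Matrix n n ℂ) : ℝ :=
  vN (∑ z, (q z : ℂ) • T z) - ∑ z, q z * vN (T z)

/-- Tensor (Kronecker) product of a family of matrices, as a matrix on the product index. -/
def mProd {l : ℕ} {K : Fin l → Type*} (ρ : ∀ i, Matrix (K i) (K i) ℂ) :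
    Matrix (∀ i, K i) (∀ i, K i) ℂ :=
  fun a b => ∏ i, ρ i (a i) (b i)

/-- The `l`-fold memoryless extension `W^{⊗l}` of a ccq-MAC `W`. -/
def Wext {X Y n : Type*} (W : X → Y → Matrix n n ℂ) {l : ℕ}
    (x : Fin l → X) (y : Fin l → Y) : Matrix (Fin l → n) (Fin l → n) ℂ :=
  fun a b => ∏ i, W (x i) (y i) (a i) (b i)

/-- χ(X;Q|Y,U) for input distribution q(u) r(x|u) s(y|u). -/
def chiXQYU {U X Y : Type*} [Fintype U] [Fintype X] [Fintype Y]
    {n : Type*} [Fintype n] [DecidableEq n] (W : X → Y → Matrix n n ℂ)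
    (q : U → ℝ) (r : U → X → ℝ) (s : U → Y → ℝ) : ℝ :=
  ∑ u, ∑ y, q u * s u y * holevo (r u) (fun x => W x y)

/-- χ(Y;Q|X,U) for input distribution q(u) r(x|u) s(y|u). -/
def chiYQXU {U X Y : Type*} [Fintype U] [Fintype X] [Fintype Y]
    {n : Type*} [Fintype n] [DecidableEq n] (W : X → Y → Matrix n n ℂ)
    (q : U → ℝ) (r : U → X → ℝ) (s : U → Y → ℝ) : ℝ :=
  ∑ u, ∑ x, q u * r u x * holevo (s u) (fun y => W x y)

/-- χ(X,Y;Q|U) for input distribution q(u) r(x|u) s(y|u). -/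
def chiXYQU {U X Y : Type*} [Fintype U] [Fintype X] [Fintype Y]
    {n : Type*} [Fintype n] [DecidableEq n] (W : X → Y → Matrix n n ℂ)
    (q : U → ℝ) (r : U → X → ℝ) (s : U → Y → ℝ) : ℝ :=
  ∑ u, q u * holevo (fun xy : X × Y => r u xy.1 * s u xy.2) (fun xy : X × Y => W xy.1 xy.2)

/-- χ(X,Y;Q) for input distribution q(u) r(x|u) s(y|u). -/
def chiXYQ {U X Y : Type*} [Fintype U] [Fintype X] [Fintype Y]
    {n : Type*} [Fintype n] [DecidableEq n] (W : X → Y → Matrix n n ℂ)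
    (q : U → ℝ) (r : U → X → ℝ) (s : U → Y → ℝ) : ℝ :=
  holevo (fun xy : X × Y => ∑ u, q u * r u xy.1 * s u xy.2) (fun xy : X × Y => W xy.1 xy.2)

/-- An (M, N, C, D) conferencing code of blocklength `l` for a ccq-MAC with input
alphabets `X`, `Y` and output space `ℂ^d`.  The conferencing protocol is modelled
extensionally: `vtrans`/`wtrans` are the transcripts of the conference messages produced by
sender 1 resp. sender 2, subject to the causality constraints that the `i`-th message of
each sender depends only on its own message and the first `i-1` messages of the other
sender; the encoders of the two senders depend only on their own message and the
transcript they received. -/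
structure ConfCode (X Y : Type*) (d l M N : ℕ) (C D : ℝ) where
  K : ℕ
  V : Fin K → ℕ
  Wc : Fin K → ℕ
  Vpos : ∀ k, 0 < V k
  Wpos : ∀ k, 0 < Wc k
  rateC : ∑ k, Real.logb 2 (V k) ≤ C
  rateD : ∑ k, Real.logb 2 (Wc k) ≤ D
  vtrans : Fin M → Fin N → ∀ k, Fin (V k)
  wtrans : Fin M → Fin N → ∀ k, Fin (Wc k)
  vCausal : ∀ m n n' i, (∀ j, j < i → wtrans m n j = wtrans m n' j) →
      vtrans m n i = vtrans m n' i
  wCausal : ∀ m m' n i, (∀ j, j < i → vtrans m n j = vtrans m' n j) →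
      wtrans m n i = wtrans m' n i
  enc1 : Fin M → Fin N → Fin l → X
  enc2 : Fin M → Fin N → Fin l → Y
  enc1Conf : ∀ m n n', wtrans m n = wtrans m n' → enc1 m n = enc1 m n'
  enc2Conf : ∀ m m' n, vtrans m n = vtrans m' n → enc2 m n = enc2 m' n
  povm : Fin M → Fin N → Matrix (Fin l → Fin d) (Fin l → Fin d) ℂ
  povmPos : ∀ m n, (povm m n).PosSemidef
  povmSum : ((1 : Matrix (Fin l → Fin d) (Fin l → Fin d) ℂ) - ∑ m, ∑ n, povm m n).PosSemidef

/-- Average success probability of a conferencing code. -/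
def ConfCode.ps {X Y : Type*} {d l M N : ℕ} {C D : ℝ}
    (c : ConfCode X Y d l M N C D) (W : X → Y → Matrix (Fin d) (Fin d) ℂ) : ℝ :=
  (1 / ((M : ℝ) * (N : ℝ))) *
    ∑ m, ∑ n, (Matrix.trace (c.povm m n * Wext W (c.enc1 m n) (c.enc2 m n))).re

/-- Achievability of a rate pair for the ccq-MAC with conferencing encoders. -/
def ConfAchievable {X Y : Type*} {d : ℕ} (W : X → Y → Matrix (Fin d) (Fin d) ℂ)
    (C D RM RN : ℝ) : Prop :=
  ∃ (M N : ℕ → ℕ) (code : (l : ℕ) → ConfCode X Y d l (M l) (N l) C D),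
    (∀ l, 0 < M l) ∧ (∀ l, 0 < N l) ∧
    RM ≤ Filter.liminf (fun l : ℕ => Real.logb 2 (M l) / l) Filter.atTop ∧
    RN ≤ Filter.liminf (fun l : ℕ => Real.logb 2 (N l) / l) Filter.atTop ∧
    Filter.Tendsto (fun l : ℕ => (code l).ps W) Filter.atTop (nhds 1)

/-- The region `𝔯_conf(W, C, D)` of Theorem 1 (with auxiliary alphabet of size at most
`|X|·|Y| + 3`). -/
def confRegion {X Y : Type*} [Fintype X] [Fintype Y] {d : ℕ}
    (W : X → Y → Matrix (Fin d) (Fin d) ℂ) (C D : ℝ) : Set (ℝ × ℝ) :=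
  closure {R : ℝ × ℝ | 0 ≤ R.1 ∧ 0 ≤ R.2 ∧
    ∃ nU : ℕ, nU ≤ Fintype.card X * Fintype.card Y + 3 ∧
    ∃ (q : Fin nU → ℝ) (r : Fin nU → X → ℝ) (s : Fin nU → Y → ℝ),
      IsProb q ∧ (∀ u, IsProb (r u)) ∧ (∀ u, IsProb (s u)) ∧
      R.1 ≤ chiXQYU W q r s + C ∧
      R.2 ≤ chiYQXU W q r s + D ∧
      R.1 + R.2 ≤ chiXYQU W q r s + C + D ∧
      R.1 + R.2 ≤ chiXYQ W q r s}

/-- A code of blocklength `l` for the ccq-MAC with common messages. -/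
structure CommCode (X Y : Type*) (d l Kl Tl Ml : ℕ) where
  enc1 : Fin Kl → Fin Ml → Fin l → X
  enc2 : Fin Tl → Fin Ml → Fin l → Y
  povm : Fin Kl → Fin Tl → Fin Ml → Matrix (Fin l → Fin d) (Fin l → Fin d) ℂ
  povmPos : ∀ k t m, (povm k t m).PosSemidef
  povmSum : ((1 : Matrix (Fin l → Fin d) (Fin l → Fin d) ℂ) -
      ∑ k, ∑ t, ∑ m, povm k t m).PosSemidef

/-- Average success probability of a common-message code. -/
def CommCode.ps {X Y : Type*} {d l Kl Tl Ml : ℕ}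
    (c : CommCode X Y d l Kl Tl Ml) (W : X → Y → Matrix (Fin d) (Fin d) ℂ) : ℝ :=
  (1 / ((Kl : ℝ) * (Tl : ℝ) * (Ml : ℝ))) *
    ∑ k, ∑ t, ∑ m, (Matrix.trace (c.povm k t m * Wext W (c.enc1 k m) (c.enc2 t m))).re

/-- Achievability of a rate triple (S_X, S_Y, S_C) for the ccq-MAC with common messages. -/
def CommAchievable {X Y : Type*} {d : ℕ} (W : X → Y → Matrix (Fin d) (Fin d) ℂ)
    (SX SY SC : ℝ) : Prop :=
  ∃ (Kl Tl Ml : ℕ → ℕ) (code : (l : ℕ) → CommCode X Y d l (Kl l) (Tl l) (Ml l)),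
    (∀ l, 0 < Kl l) ∧ (∀ l, 0 < Tl l) ∧ (∀ l, 0 < Ml l) ∧
    SX ≤ Filter.liminf (fun l : ℕ => Real.logb 2 (Kl l) / l) Filter.atTop ∧
    SY ≤ Filter.liminf (fun l : ℕ => Real.logb 2 (Tl l) / l) Filter.atTop ∧
    SC ≤ Filter.liminf (fun l : ℕ => Real.logb 2 (Ml l) / l) Filter.atTop ∧
    Filter.Tendsto (fun l : ℕ => (code l).ps W) Filter.atTop (nhds 1)

/-- The region `𝔯_comm(W)`; a point is a triple `(S_C, S_X, S_Y)`. -/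
def commRegion {X Y : Type*} [Fintype X] [Fintype Y] {d : ℕ}
    (W : X → Y → Matrix (Fin d) (Fin d) ℂ) : Set (ℝ × ℝ × ℝ) :=
  closure {R : ℝ × ℝ × ℝ | 0 ≤ R.1 ∧ 0 ≤ R.2.1 ∧ 0 ≤ R.2.2 ∧
    ∃ (nU : ℕ) (q : Fin nU → ℝ) (r : Fin nU → X → ℝ) (s : Fin nU → Y → ℝ),
      IsProb q ∧ (∀ u, IsProb (r u)) ∧ (∀ u, IsProb (s u)) ∧
      R.2.1 ≤ chiXQYU W q r s ∧
      R.2.2 ≤ chiYQXU W q r s ∧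
      R.2.1 + R.2.2 ≤ chiXYQU W q r s ∧
      R.1 + R.2.1 + R.2.2 ≤ chiXYQ W q r s}


section Spectral

variable {n : Type*} [Fintype n] [DecidableEq n]

open Polynomial in
lemma charpoly_diagonal_eq (d : n → ℂ) :
    (Matrix.diagonal d).charpoly = ∏ i, (X - C (d i)) := by
  have h : charmatrix (Matrix.diagonal d) = Matrix.diagonal (fun i => (X : ℂ[X]) - C (d i)) := by
    ext i j
    by_cases hij : i = j
    · subst hij; rw [charmatrix_apply_eq, Matrix.diagonal_apply_eq, Matrix.diagonal_apply_eq]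
    · rw [charmatrix_apply_ne _ _ _ hij, Matrix.diagonal_apply_ne _ hij,
        Matrix.diagonal_apply_ne _ hij, map_zero, neg_zero]
  rw [Matrix.charpoly, h, Matrix.det_diagonal]

open Polynomial in
lemma charpoly_conj_unitary {V : Matrix n n ℂ} (hV : V ∈ Matrix.unitaryGroup n ℂ)
    (B : Matrix n n ℂ) : (V * B * Vᴴ).charpoly = B.charpoly := by
  have hVV : V * Vᴴ = 1 := by
    have := Matrix.mem_unitaryGroup_iff.mp hV
    rwa [Matrix.star_eq_conjTranspose] at this
  have hmul : (C : ℂ →+* ℂ[X]).mapMatrix V * (C : ℂ →+* ℂ[X]).mapMatrix Vᴴ = 1 := by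
    rw [← _root_.map_mul, hVV, _root_.map_one]
  have h : charmatrix (V * B * Vᴴ)
      = (C : ℂ →+* ℂ[X]).mapMatrix V * charmatrix B * (C : ℂ →+* ℂ[X]).mapMatrix Vᴴ := by
    show Matrix.scalar n (X : ℂ[X]) - (C : ℂ →+* ℂ[X]).mapMatrix (V * B * Vᴴ)
        = (C : ℂ →+* ℂ[X]).mapMatrix V * (Matrix.scalar n (X : ℂ[X])
            - (C : ℂ →+* ℂ[X]).mapMatrix B) * (C : ℂ →+* ℂ[X]).mapMatrix Vᴴ
    rw [Matrix.scalar_apply, ← Matrix.smul_one_eq_diagonal]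
    rw [_root_.map_mul, _root_.map_mul, mul_sub, sub_mul]
    congr 1
    rw [mul_smul_comm, mul_one, smul_mul_assoc, hmul]
  rw [Matrix.charpoly, Matrix.charpoly, h, Matrix.det_mul, Matrix.det_mul]
  have h2 : ((C : ℂ →+* ℂ[X]).mapMatrix V).det * ((C : ℂ →+* ℂ[X]).mapMatrix Vᴴ).det = 1 := by
    rw [← RingHom.map_det, ← RingHom.map_det, ← _root_.map_mul, ← Matrix.det_mul, hVV, Matrix.det_one, _root_.map_one]
  calc ((C : ℂ →+* ℂ[X]).mapMatrix V).det * (charmatrix B).det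
        * ((C : ℂ →+* ℂ[X]).mapMatrix Vᴴ).det
      = (charmatrix B).det * (((C : ℂ →+* ℂ[X]).mapMatrix V).det
          * ((C : ℂ →+* ℂ[X]).mapMatrix Vᴴ).det) := by ring
    _ = (charmatrix B).det := by rw [h2, mul_one]

open Polynomial in
lemma eigenvalues_multiset_eq {A V : Matrix n n ℂ} {q : n → ℝ}
    (hV : V ∈ Matrix.unitaryGroup n ℂ)
    (hAe : A = V * Matrix.diagonal (fun i => (q i : ℂ)) * Vᴴ) (hA : A.IsHermitian) :
    Finset.univ.val.map hA.eigenvalues = Finset.univ.val.map q := by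
  have hU := hA.eigenvectorUnitary.2
  have h1 : A.charpoly = ∏ i, (X - C ((hA.eigenvalues i : ℂ))) := by
    conv_lhs => rw [hA.spectral_theorem, Unitary.conjStarAlgAut_apply, Matrix.star_eq_conjTranspose]
    rw [charpoly_conj_unitary hU, charpoly_diagonal_eq]
    rfl
  have h2 : A.charpoly = ∏ i, (X - C ((q i : ℂ))) := by
    rw [hAe, charpoly_conj_unitary hV, charpoly_diagonal_eq]
  have h3 : (Multiset.map (fun a : ℂ => X - C a)
        (Finset.univ.val.map (fun i => ((hA.eigenvalues i : ℂ))))).prod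
      = (Multiset.map (fun a : ℂ => X - C a)
        (Finset.univ.val.map (fun i => ((q i : ℂ))))).prod := by
    rw [Multiset.map_map, Multiset.map_map]
    rw [← Finset.prod_eq_multiset_prod, ← Finset.prod_eq_multiset_prod]
    exact h1.symm.trans h2
  have h4 := congrArg Polynomial.roots h3
  rw [roots_multiset_prod_X_sub_C, roots_multiset_prod_X_sub_C] at h4
  apply Multiset.map_injective Complex.ofReal_injective
  rw [Multiset.map_map, Multiset.map_map]
  exact h4

lemma sum_f_eigenvalues {A V : Matrix n n ℂ} {q : n → ℝ}
    (hV : V ∈ Matrix.unitaryGroup n ℂ)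
    (hAe : A = V * Matrix.diagonal (fun i => (q i : ℂ)) * Vᴴ) (hA : A.IsHermitian)
    (f : ℝ → ℝ) : ∑ i, f (hA.eigenvalues i) = ∑ i, f (q i) := by
  have h := congrArg (fun s : Multiset ℝ => (s.map f).sum) (eigenvalues_multiset_eq hV hAe hA)
  simpa only [Multiset.map_map, Function.comp, Finset.sum_eq_multiset_sum] using h

lemma isHermitian_conj_diag {V : Matrix n n ℂ} (q : n → ℝ) :
    (V * Matrix.diagonal (fun i => (q i : ℂ)) * Vᴴ).IsHermitian := by
  apply Matrix.isHermitian_mul_mul_conjTranspose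
  rw [Matrix.IsHermitian, Matrix.diagonal_conjTranspose]
  exact congrArg Matrix.diagonal (funext fun i => Complex.conj_ofReal (q i))

lemma vN_eq_of_diag {A V : Matrix n n ℂ} {q : n → ℝ}
    (hV : V ∈ Matrix.unitaryGroup n ℂ)
    (hAe : A = V * Matrix.diagonal (fun i => (q i : ℂ)) * Vᴴ) :
    vN A = -∑ i, q i * Real.logb 2 (q i) := by
  have hA : A.IsHermitian := hAe ▸ isHermitian_conj_diag q
  rw [vN, dif_pos hA]
  exact congrArg Neg.neg (sum_f_eigenvalues hV hAe hA (fun t => t * Real.logb 2 t))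

lemma sum_eigenvalues_eq_one {A : Matrix n n ℂ} (hA : A.IsHermitian) (htr : A.trace = 1) :
    ∑ i, hA.eigenvalues i = 1 := by
  have h := congrArg Matrix.trace hA.spectral_theorem
  rw [htr, Unitary.conjStarAlgAut_apply, Matrix.trace_mul_cycle] at h
  rw [show (star (hA.eigenvectorUnitary : Matrix n n ℂ))
      * (hA.eigenvectorUnitary : Matrix n n ℂ) = 1 from
    Matrix.mem_unitaryGroup_iff'.mp hA.eigenvectorUnitary.2, one_mul,
    Matrix.trace_diagonal] at h
  have : ((∑ i, hA.eigenvalues i : ℝ) : ℂ) = 1 := by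
    rw [Complex.ofReal_sum]; exact h.symm
  exact_mod_cast this

end Spectral

section PiSums

variable {l : ℕ} {K : Fin l → Type*} [∀ i, Fintype (K i)]

lemma sum_pi_prod {β : Type*} [CommSemiring β] (g : ∀ i, K i → β) :
    ∑ b : (∀ i, K i), ∏ i, g i (b i) = ∏ i, ∑ k, g i k := by
  rw [Finset.prod_univ_sum, Fintype.piFinset_univ]

variable [∀ i, DecidableEq (K i)]

lemma sum_pi_update {β : Type*} [CommRing β] (g : ∀ i, K i → β)
    (i₀ : Fin l) (f : K i₀ → β) (h1 : ∀ i, ∑ k, g i k = 1) :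
    ∑ b : (∀ i, K i), f (b i₀) * ∏ i, g i (b i) = ∑ j, f j * g i₀ j := by
  have key : ∀ b : (∀ i, K i), f (b i₀) * ∏ i, g i (b i)
      = ∏ i, Function.update g i₀ (fun k => f k * g i₀ k) i (b i) := by
    intro b
    have h2 : (fun i => Function.update g i₀ (fun k => f k * g i₀ k) i (b i))
        = Function.update (fun i => g i (b i)) i₀ (f (b i₀) * g i₀ (b i₀)) := by
      funext i
      by_cases hi : i = i₀
      · subst hi; rw [Function.update_self, Function.update_self]
      · rw [Function.update_of_ne hi, Function.update_of_ne hi]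
    rw [h2, Finset.prod_update_of_mem (Finset.mem_univ i₀), Finset.sdiff_singleton_eq_erase,
      ← Finset.mul_prod_erase Finset.univ (fun i => g i (b i)) (Finset.mem_univ i₀), mul_assoc]
  rw [Finset.sum_congr rfl (fun b _ => key b), sum_pi_prod]
  rw [Finset.prod_eq_single i₀
    (fun i _ hi => by rw [Function.update_of_ne hi]; exact h1 i)
    (fun h => absurd (Finset.mem_univ i₀) h)]
  rw [Function.update_self]

lemma sum_pi_ite {β : Type*} [CommRing β] (g : ∀ i, K i → β)
    (i₀ : Fin l) (j : K i₀) (h1 : ∀ i, ∑ k, g i k = 1) :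
    ∑ b : (∀ i, K i), (if b i₀ = j then ∏ i, g i (b i) else 0) = g i₀ j := by
  have h : ∀ b : (∀ i, K i), (if b i₀ = j then ∏ i, g i (b i) else 0)
      = (if b i₀ = j then (1 : β) else 0) * ∏ i, g i (b i) := by
    intro b; split <;> simp
  rw [Finset.sum_congr rfl (fun b _ => h b),
    sum_pi_update g i₀ (fun k => if k = j then 1 else 0) h1]
  simp [Finset.sum_ite_eq']

lemma sum_fiber {β : Type*} [CommRing β] (r : (∀ i, K i) → β) (i₀ : Fin l) (f : K i₀ → β) :
    ∑ b : (∀ i, K i), f (b i₀) * r b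
      = ∑ j, f j * ∑ b : (∀ i, K i), (if b i₀ = j then r b else 0) := by
  simp only [Finset.mul_sum, mul_ite, mul_zero]
  rw [Finset.sum_comm]
  refine Finset.sum_congr rfl fun b _ => ?_
  simp [Finset.sum_ite_eq]

end PiSums

section MProd

variable {l : ℕ} {K : Fin l → Type*} [∀ i, Fintype (K i)] [∀ i, DecidableEq (K i)]

lemma mProd_mul (A B : ∀ i, Matrix (K i) (K i) ℂ) :
    mProd (fun i => A i * B i) = mProd A * mProd B := by
  ext a b
  simp only [mProd, Matrix.mul_apply]
  rw [← sum_pi_prod (g := fun i k => A i (a i) k * B i k (b i))]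
  exact Finset.sum_congr rfl fun c _ => Finset.prod_mul_distrib

lemma mProd_conjTranspose (A : ∀ i, Matrix (K i) (K i) ℂ) :
    (mProd A)ᴴ = mProd (fun i => (A i)ᴴ) := by
  ext a b
  simp only [mProd, Matrix.conjTranspose_apply, star_prod]

lemma mProd_diagonal (d : ∀ i, K i → ℂ) :
    mProd (fun i => Matrix.diagonal (d i)) = Matrix.diagonal (fun b => ∏ i, d i (b i)) := by
  ext a b
  by_cases h : a = b
  · subst h; simp [mProd, Matrix.diagonal_apply_eq]
  · obtain ⟨i, hi⟩ := Function.ne_iff.mp h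
    rw [Matrix.diagonal_apply_ne _ h]
    exact Finset.prod_eq_zero (Finset.mem_univ i) (Matrix.diagonal_apply_ne _ hi)

lemma mProd_one : mProd (fun i => (1 : Matrix (K i) (K i) ℂ)) = 1 := by
  have h : ∀ i : Fin l, (1 : Matrix (K i) (K i) ℂ) = Matrix.diagonal (fun _ => 1) := by
    intro i; rw [Matrix.diagonal_one]
  rw [show (fun i => (1 : Matrix (K i) (K i) ℂ)) = fun i => Matrix.diagonal (fun _ => (1:ℂ)) from
    funext h, mProd_diagonal]
  simp

lemma mProd_trace (A : ∀ i, Matrix (K i) (K i) ℂ) :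
    (mProd A).trace = ∏ i, (A i).trace := by
  simp only [Matrix.trace, Matrix.diag, mProd]
  exact sum_pi_prod (g := fun i k => A i k k)

lemma mProd_unitary (V : ∀ i, Matrix (K i) (K i) ℂ)
    (hV : ∀ i, V i ∈ Matrix.unitaryGroup (K i) ℂ) :
    mProd V ∈ Matrix.unitaryGroup (∀ i, K i) ℂ := by
  rw [Matrix.mem_unitaryGroup_iff, Matrix.star_eq_conjTranspose, mProd_conjTranspose,
    ← mProd_mul]
  rw [show (fun i => V i * (V i)ᴴ) = fun i => (1 : Matrix (K i) (K i) ℂ) from funext fun i => by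
    have := Matrix.mem_unitaryGroup_iff.mp (hV i)
    rwa [Matrix.star_eq_conjTranspose] at this]
  exact mProd_one

end MProd

section Gibbs

lemma logb_prod {ι : Type*} (s : Finset ι) (f : ι → ℝ) (h : ∀ i ∈ s, f i ≠ 0) :
    Real.logb 2 (∏ i ∈ s, f i) = ∑ i ∈ s, Real.logb 2 (f i) := by
  simp only [Real.logb, Real.log_prod h, Finset.sum_div]

lemma gibbs_pt {P t s : ℝ} (hP : 0 ≤ P) (ht : 0 ≤ t) (hs : 0 ≤ s) (h0 : s = 0 → t * P = 0) :
    t * P * Real.logb 2 s + (t - s) * P / Real.log 2 ≤ t * P * Real.logb 2 t := by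
  have hl2 : 0 < Real.log 2 := Real.log_pos one_lt_two
  rcases eq_or_lt_of_le ht with h | h
  · rw [← h]
    have h1 : (0 - s) * P ≤ 0 := by nlinarith
    have h2 : (0 - s) * P / Real.log 2 ≤ 0 := by
      rw [div_eq_mul_inv]
      exact mul_nonpos_iff.mpr (Or.inr ⟨h1, inv_nonneg.mpr hl2.le⟩)
    simpa using h2
  · rcases eq_or_lt_of_le hs with h' | h'
    · have hP0 : P = 0 := by
        have := h0 h'.symm; nlinarith
      simp [hP0]
    · have hlog : Real.log (s / t) ≤ s / t - 1 := Real.log_le_sub_one_of_pos (div_pos h' h)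
      rw [Real.log_div h'.ne' h.ne'] at hlog
      have ht' : t * (s / t) = s := by field_simp
      have key : t * Real.log s + (t - s) ≤ t * Real.log t := by
        have h2 := mul_le_mul_of_nonneg_left hlog h.le
        nlinarith
      have expand : t * P * Real.logb 2 s + (t - s) * P / Real.log 2
          = (t * Real.log s + (t - s)) * P / Real.log 2 := by
        simp only [Real.logb]; ring
      have expand2 : t * P * Real.logb 2 t = (t * Real.log t) * P / Real.log 2 := by
        simp only [Real.logb]; ring
      rw [expand, expand2]
      apply div_le_div_of_nonneg_right ?_ hl2.le
      exact mul_le_mul_of_nonneg_right key hP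

end Gibbs

section Klein

variable {n : Type*} [Fintype n] [DecidableEq n]

lemma psd_diag_re_nonneg {N : Matrix n n ℂ} (hN : N.PosSemidef) (b : n) : 0 ≤ (N b b).re := by
  have h := hN.re_dotProduct_nonneg (Pi.single b 1)
  have e : dotProduct (star (Pi.single b 1)) (N *ᵥ Pi.single b 1) = N b b := by
    simp [dotProduct, Matrix.mulVec_single, Pi.single_apply, apply_ite,
      Finset.sum_ite_eq]
  rw [e] at h
  simpa using h

lemma klein {A : Matrix n n ℂ} (hA : A.PosSemidef) (htr : A.trace = 1) {V : Matrix n n ℂ}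
    (hV : V ∈ Matrix.unitaryGroup n ℂ) {q : n → ℝ} (hq0 : ∀ b, 0 ≤ q b)
    (hq1 : ∑ b, q b = 1)
    (hsupp : ∀ b, q b = 0 → ((Vᴴ * A * V) b b).re = 0) :
    vN A ≤ -∑ b, ((Vᴴ * A * V) b b).re * Real.logb 2 (q b) := by
  classical
  have hH : A.IsHermitian := hA.1
  set U : Matrix n n ℂ := (hH.eigenvectorUnitary : Matrix n n ℂ) with hU
  set lam := hH.eigenvalues with hlam
  set M : Matrix n n ℂ := Uᴴ * V with hM
  have hMu : M ∈ Matrix.unitaryGroup n ℂ := by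
    rw [hM, ← Matrix.star_eq_conjTranspose]
    exact mul_mem (Unitary.star_mem hH.eigenvectorUnitary.2) hV
  set P : n → n → ℝ := fun a b => Complex.normSq (M a b) with hP
  have hP0 : ∀ a b, 0 ≤ P a b := fun a b => Complex.normSq_nonneg _
  have hconj : Vᴴ * A * V = Mᴴ * Matrix.diagonal (fun a => ((lam a : ℝ) : ℂ)) * M := by
    conv_lhs => rw [hH.spectral_theorem, Unitary.conjStarAlgAut_apply]
    rw [Matrix.star_eq_conjTranspose, hM, Matrix.conjTranspose_mul,
      Matrix.conjTranspose_conjTranspose]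
    have : Matrix.diagonal (RCLike.ofReal ∘ hH.eigenvalues)
        = Matrix.diagonal (fun a => ((lam a : ℝ) : ℂ)) := rfl
    rw [← this]
    simp only [Matrix.mul_assoc]; rfl
  have hentry : ∀ b, ((Vᴴ * A * V) b b).re = ∑ a, lam a * P a b := by
    intro b
    rw [hconj, Matrix.mul_assoc, Matrix.mul_apply]
    simp only [Matrix.diagonal_mul, Matrix.conjTranspose_apply]
    rw [Complex.re_sum]
    refine Finset.sum_congr rfl fun a _ => ?_
    have e : star (M a b) * (((lam a : ℝ) : ℂ) * M a b) = ((lam a * P a b : ℝ) : ℂ) := by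
      rw [show star (M a b) * (((lam a : ℝ) : ℂ) * M a b)
          = ((lam a : ℝ) : ℂ) * (M a b * star (M a b)) by ring]
      rw [Complex.star_def, Complex.mul_conj]
      rw [← Complex.ofReal_mul]
    rw [e, Complex.ofReal_re]
  have hrow : ∀ a, ∑ b, P a b = 1 := by
    intro a
    have h1 := Matrix.mem_unitaryGroup_iff.mp hMu
    have h2 := congrArg (fun N : Matrix n n ℂ => N a a) h1
    simp only [Matrix.mul_apply, Matrix.star_apply, Matrix.one_apply_eq] at h2
    have h3 : ∑ b, ((P a b : ℝ) : ℂ) = 1 := by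
      rw [← h2]
      refine Finset.sum_congr rfl fun b _ => ?_
      rw [Complex.star_def, Complex.mul_conj]
    have h4 : ((∑ b, P a b : ℝ) : ℂ) = 1 := by rw [Complex.ofReal_sum]; exact h3
    exact_mod_cast h4
  have hcol : ∀ b, ∑ a, P a b = 1 := by
    intro b
    have h1 := Matrix.mem_unitaryGroup_iff'.mp hMu
    have h2 := congrArg (fun N : Matrix n n ℂ => N b b) h1
    simp only [Matrix.mul_apply, Matrix.star_apply, Matrix.one_apply_eq] at h2
    have h3 : ∑ a, ((P a b : ℝ) : ℂ) = 1 := by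
      rw [← h2]
      refine Finset.sum_congr rfl fun a _ => ?_
      rw [Complex.star_def, mul_comm, Complex.mul_conj]
    have h4 : ((∑ a, P a b : ℝ) : ℂ) = 1 := by rw [Complex.ofReal_sum]; exact h3
    exact_mod_cast h4
  have hlam0 : ∀ a, 0 ≤ lam a := hA.eigenvalues_nonneg
  have hlam1 : ∑ a, lam a = 1 := sum_eigenvalues_eq_one hH htr
  have hzero : ∀ a b, q b = 0 → lam a * P a b = 0 := by
    intro a b hqb
    have h0 : ∑ a, lam a * P a b = 0 := by rw [← hentry b]; exact hsupp b hqb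
    exact (Finset.sum_eq_zero_iff_of_nonneg
      (fun a _ => mul_nonneg (hlam0 a) (hP0 a b))).mp h0 a (Finset.mem_univ a)
  rw [vN, dif_pos hH]
  have hrw : ∀ b, ((Vᴴ * A * V) b b).re * Real.logb 2 (q b)
      = ∑ a, lam a * P a b * Real.logb 2 (q b) := fun b => by rw [hentry b, Finset.sum_mul]
  rw [Finset.sum_congr rfl fun b _ => hrw b, neg_le_neg_iff, Finset.sum_comm]
  have hR : ∀ a, lam a * Real.logb 2 (lam a)
      = ∑ b, lam a * P a b * Real.logb 2 (lam a) := by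
    intro a
    calc lam a * Real.logb 2 (lam a)
        = (lam a * Real.logb 2 (lam a)) * ∑ b, P a b := by rw [hrow a, mul_one]
      _ = ∑ b, lam a * P a b * Real.logb 2 (lam a) := by
          rw [Finset.mul_sum]; exact Finset.sum_congr rfl fun b _ => by ring
  conv_rhs => rw [Finset.sum_congr rfl fun a (_ : a ∈ Finset.univ) => hR a]
  have hcorr : ∑ a, ∑ b, (lam a - q b) * P a b / Real.log 2 = 0 := by
    have h1 : ∑ a, ∑ b, (lam a - q b) * P a b = 0 := by
      simp only [sub_mul, Finset.sum_sub_distrib]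
      have e1 : ∑ a, ∑ b, lam a * P a b = 1 := by
        rw [Finset.sum_congr rfl fun a (_ : a ∈ Finset.univ) => by
          rw [← Finset.mul_sum, hrow a, mul_one]]
        exact hlam1
      have e2 : ∑ a, ∑ b, q b * P a b = 1 := by
        rw [Finset.sum_comm]
        rw [Finset.sum_congr rfl fun b (_ : b ∈ Finset.univ) => by
          rw [← Finset.mul_sum, hcol b, mul_one]]
        exact hq1
      rw [e1, e2, sub_self]
    have h2 : ∑ a, ∑ b, (lam a - q b) * P a b / Real.log 2
        = (∑ a, ∑ b, (lam a - q b) * P a b) / Real.log 2 := by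
      simp only [Finset.sum_div]
    rw [h2, h1, zero_div]
  have hpt : ∀ a, ∀ b, lam a * P a b * Real.logb 2 (q b) + (lam a - q b) * P a b / Real.log 2
      ≤ lam a * P a b * Real.logb 2 (lam a) := by
    intro a b
    exact gibbs_pt (hP0 a b) (hlam0 a) (hq0 b) (fun h => hzero a b h)
  have hsum := Finset.sum_le_sum fun a (_ : a ∈ Finset.univ) =>
    Finset.sum_le_sum fun b (_ : b ∈ Finset.univ) => hpt a b
  simp only [Finset.sum_add_distrib] at hsum
  rw [hcorr] at hsum
  linarith [hsum]

end Klein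

section MProdSpectral

variable {l : ℕ} {K : Fin l → Type*} [∀ i, Fintype (K i)] [∀ i, DecidableEq (K i)]

lemma mProd_spectral (A : ∀ i, Matrix (K i) (K i) ℂ) (hA : ∀ i, (A i).IsHermitian) :
    mProd A = mProd (fun i => ((hA i).eigenvectorUnitary : Matrix (K i) (K i) ℂ))
      * Matrix.diagonal (fun b : (∀ i, K i) => ((∏ i, (hA i).eigenvalues (b i) : ℝ) : ℂ))
      * (mProd (fun i => ((hA i).eigenvectorUnitary : Matrix (K i) (K i) ℂ)))ᴴ := by
  conv_lhs => rw [show A = fun i => ((hA i).eigenvectorUnitary : Matrix (K i) (K i) ℂ)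
      * Matrix.diagonal (fun j => (((hA i).eigenvalues j : ℝ) : ℂ))
      * ((hA i).eigenvectorUnitary : Matrix (K i) (K i) ℂ)ᴴ from funext fun i => by
    have h := (hA i).spectral_theorem
    rw [Unitary.conjStarAlgAut_apply, Matrix.star_eq_conjTranspose] at h
    exact h]
  have hd : Matrix.diagonal (fun b : (∀ i, K i) => ∏ i, (((hA i).eigenvalues (b i) : ℝ) : ℂ))
      = Matrix.diagonal (fun b : (∀ i, K i) => ((∏ i, (hA i).eigenvalues (b i) : ℝ) : ℂ)) :=
    congrArg _ (funext fun b => (Complex.ofReal_prod _ _).symm)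
  rw [mProd_mul, mProd_mul, mProd_diagonal, mProd_conjTranspose, hd]

lemma mProd_posSemidef (A : ∀ i, Matrix (K i) (K i) ℂ) (hA : ∀ i, (A i).PosSemidef) :
    (mProd A).PosSemidef := by
  rw [mProd_spectral A (fun i => (hA i).1)]
  apply Matrix.PosSemidef.mul_mul_conjTranspose_same
  rw [Matrix.posSemidef_diagonal_iff]
  intro b
  exact Complex.zero_le_real.mpr (Finset.prod_nonneg fun i _ => (hA i).eigenvalues_nonneg (b i))

lemma prod_entropy (lam : ∀ i, K i → ℝ) (h1 : ∀ i, ∑ j, lam i j = 1) :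
    ∑ b : (∀ i, K i), (∏ i, lam i (b i)) * Real.logb 2 (∏ i, lam i (b i))
      = ∑ i, ∑ j, lam i j * Real.logb 2 (lam i j) := by
  have step : ∀ b : (∀ i, K i), (∏ i, lam i (b i)) * Real.logb 2 (∏ i, lam i (b i))
      = ∑ i, Real.logb 2 (lam i (b i)) * ∏ i', lam i' (b i') := by
    intro b
    by_cases hz : ∀ i, lam i (b i) ≠ 0
    · rw [logb_prod _ _ (fun i _ => hz i), mul_comm, Finset.sum_mul]
    · push_neg at hz
      obtain ⟨i₀, hi₀⟩ := hz
      have hp0 : ∏ i, lam i (b i) = 0 := Finset.prod_eq_zero (Finset.mem_univ i₀) hi₀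
      simp [hp0]
  rw [Finset.sum_congr rfl fun b _ => step b, Finset.sum_comm]
  refine Finset.sum_congr rfl fun i _ => ?_
  rw [sum_pi_update lam i (fun j => Real.logb 2 (lam i j)) h1]
  exact Finset.sum_congr rfl fun j _ => mul_comm _ _

lemma vN_mProd (A : ∀ i, Matrix (K i) (K i) ℂ)
    (hA : ∀ i, (A i).PosSemidef) (htr : ∀ i, (A i).trace = 1) :
    vN (mProd A) = ∑ i, vN (A i) := by
  have hH : ∀ i, (A i).IsHermitian := fun i => (hA i).1
  have hu : mProd (fun i => ((hH i).eigenvectorUnitary : Matrix (K i) (K i) ℂ))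
      ∈ Matrix.unitaryGroup (∀ i, K i) ℂ :=
    mProd_unitary _ (fun i => (hH i).eigenvectorUnitary.2)
  rw [vN_eq_of_diag hu (mProd_spectral A hH)]
  have hvN : ∀ i, vN (A i) = -∑ j, (hH i).eigenvalues j
      * Real.logb 2 ((hH i).eigenvalues j) := fun i => by rw [vN, dif_pos (hH i)]
  rw [Finset.sum_congr rfl fun i (_ : i ∈ Finset.univ) => hvN i, Finset.sum_neg_distrib, neg_inj]
  exact prod_entropy _ (fun i => sum_eigenvalues_eq_one (hH i) (htr i))

lemma posSemidef_real_smul {n : Type*} [Fintype n] {A : Matrix n n ℂ} (hA : A.PosSemidef)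
    {c : ℝ} (hc : 0 ≤ c) : (((c : ℝ) : ℂ) • A).PosSemidef := by
  constructor
  · show (((c : ℝ) : ℂ) • A)ᴴ = ((c : ℝ) : ℂ) • A
    rw [Matrix.conjTranspose_smul, hA.1.eq]
    congr 1
    rw [Complex.star_def, Complex.conj_ofReal]
  · intro x
    exact (hA.smul (Complex.zero_le_real.mpr hc)).2 x

lemma posSemidef_sum {ι : Type*} {n : Type*} [Fintype n] (s : Finset ι)
    (f : ι → Matrix n n ℂ) (h : ∀ i ∈ s, (f i).PosSemidef) : (∑ i ∈ s, f i).PosSemidef := by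
  constructor
  · show (∑ i ∈ s, f i)ᴴ = ∑ i ∈ s, f i
    rw [Matrix.conjTranspose_sum]
    exact Finset.sum_congr rfl fun i hi => (h i hi).1.eq
  · intro x
    exact (Matrix.posSemidef_sum s h).2 x

end MProdSpectral

/-- **Multi-letter subadditivity of the Holevo quantity**:
χ(Xˡ; Q₁⋯Q_l) ≤ ∑ᵢ χ(pᵢ, Wᵢ), the `pᵢ` being the single-letter marginals of `p`. -/
theorem holevo_multi_letter_subadditive {X : Type*} [Fintype X] [DecidableEq X]
    (l : ℕ) (K : Fin l → Type*) [∀ i, Fintype (K i)] [∀ i, DecidableEq (K i)]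
    (W : ∀ i, X → Matrix (K i) (K i) ℂ) (hW : ∀ i x, IsState (W i x))
    (p : (Fin l → X) → ℝ) (hp : IsProb p) :
    holevo p (fun xs : Fin l → X => mProd (fun i => W i (xs i))) ≤
      ∑ i, holevo (fun x : X => ∑ xs : Fin l → X, if xs i = x then p xs else 0) (W i) := by
  
  classical
  obtain ⟨hp0, hp1⟩ := hp
  set pm : ∀ _ : Fin l, X → ℝ :=
    fun i x => ∑ xs : Fin l → X, if xs i = x then p xs else 0 with hpm
  set σ : ∀ i : Fin l, Matrix (K i) (K i) ℂ :=
    fun i => ∑ x, ((pm i x : ℝ) : ℂ) • W i x with hσdef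
  set ρ : Matrix (∀ i, K i) (∀ i, K i) ℂ :=
    ∑ xs : Fin l → X, ((p xs : ℝ) : ℂ) • mProd (fun i => W i (xs i)) with hρdef
  -- basic facts about the marginals
  have hpm0 : ∀ i x, 0 ≤ pm i x := by
    intro i x
    simp only [hpm]
    exact Finset.sum_nonneg fun xs _ => by by_cases h : xs i = x <;> simp [h, hp0 xs]
  have hpm1 : ∀ i, ∑ x, pm i x = 1 := by
    intro i
    simp only [hpm]
    rw [Finset.sum_comm]
    calc ∑ xs : Fin l → X, ∑ x, (if xs i = x then p xs else 0)
        = ∑ xs : Fin l → X, p xs := by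
          refine Finset.sum_congr rfl fun xs _ => ?_
          simp [Finset.sum_ite_eq]
      _ = 1 := hp1
  have hσ_regroup : ∀ i, σ i = ∑ xs : Fin l → X, ((p xs : ℝ) : ℂ) • W i (xs i) := by
    intro i
    simp only [hσdef, hpm]
    calc (∑ x, ((∑ xs : Fin l → X, if xs i = x then p xs else 0 : ℝ) : ℂ) • W i x)
        = ∑ x, ∑ xs : Fin l → X,
            (if xs i = x then ((p xs : ℝ) : ℂ) • W i x else 0) := by
          refine Finset.sum_congr rfl fun x _ => ?_
          rw [Complex.ofReal_sum, Finset.sum_smul]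
          refine Finset.sum_congr rfl fun xs _ => ?_
          split <;> simp
      _ = ∑ xs : Fin l → X, ∑ x,
            (if xs i = x then ((p xs : ℝ) : ℂ) • W i x else 0) := Finset.sum_comm
      _ = ∑ xs : Fin l → X, ((p xs : ℝ) : ℂ) • W i (xs i) := by
          refine Finset.sum_congr rfl fun xs _ => ?_
          simp [Finset.sum_ite_eq]
  have hσ_psd : ∀ i, (σ i).PosSemidef := by
    intro i
    rw [hσdef]
    exact posSemidef_sum _ _ fun x _ => posSemidef_real_smul (hW i x).1 (hpm0 i x)
  have hσ_tr : ∀ i, (σ i).trace = 1 := by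
    intro i
    rw [hσdef, Matrix.trace_sum]
    calc (∑ x, (((pm i x : ℝ) : ℂ) • W i x).trace)
        = ∑ x, ((pm i x : ℝ) : ℂ) := by
          refine Finset.sum_congr rfl fun x _ => ?_
          rw [Matrix.trace_smul, (hW i x).2, smul_eq_mul, mul_one]
      _ = 1 := by rw [← Complex.ofReal_sum, hpm1 i, Complex.ofReal_one]
  have hσH : ∀ i, (σ i).IsHermitian := fun i => (hσ_psd i).1
  -- the product eigenvector unitary
  have hVmu : ∀ i, ((hσH i).eigenvectorUnitary : Matrix (K i) (K i) ℂ)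
      ∈ Matrix.unitaryGroup (K i) ℂ := fun i => (hσH i).eigenvectorUnitary.2
  set Vb : Matrix (∀ i, K i) (∀ i, K i) ℂ :=
    mProd (fun i => ((hσH i).eigenvectorUnitary : Matrix (K i) (K i) ℂ)) with hVbdef
  have hVbu : Vb ∈ Matrix.unitaryGroup (∀ i, K i) ℂ := mProd_unitary _ hVmu
  have hdiag : ∀ i, ((hσH i).eigenvectorUnitary : Matrix (K i) (K i) ℂ)ᴴ * σ i
      * ((hσH i).eigenvectorUnitary : Matrix (K i) (K i) ℂ)
      = Matrix.diagonal (fun j => (((hσH i).eigenvalues j : ℝ) : ℂ)) := by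
    intro i
    have h := (hσH i).conjStarAlgAut_star_eigenvectorUnitary
    rw [Unitary.conjStarAlgAut_star_apply, Matrix.star_eq_conjTranspose] at h
    exact h
  -- state facts about ρ
  have hρ_psd : ρ.PosSemidef := by
    rw [hρdef]
    exact posSemidef_sum _ _ fun xs _ =>
      posSemidef_real_smul (mProd_posSemidef _ fun i => (hW i (xs i)).1) (hp0 xs)
  have hρ_tr : ρ.trace = 1 := by
    rw [hρdef, Matrix.trace_sum]
    calc (∑ xs : Fin l → X, (((p xs : ℝ) : ℂ) • mProd (fun i => W i (xs i))).trace)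
        = ∑ xs : Fin l → X, ((p xs : ℝ) : ℂ) := by
          refine Finset.sum_congr rfl fun xs _ => ?_
          rw [Matrix.trace_smul, mProd_trace, Finset.prod_congr rfl fun i _ => (hW i (xs i)).2,
            Finset.prod_const_one, smul_eq_mul, mul_one]
      _ = 1 := by rw [← Complex.ofReal_sum, hp1, Complex.ofReal_one]
  -- conjugated ρ
  have hVρV : Vbᴴ * ρ * Vb = ∑ xs : Fin l → X, ((p xs : ℝ) : ℂ) •
      mProd (fun i => ((hσH i).eigenvectorUnitary : Matrix (K i) (K i) ℂ)ᴴ * W i (xs i)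
        * ((hσH i).eigenvectorUnitary : Matrix (K i) (K i) ℂ)) := by
    rw [hρdef, Matrix.mul_sum, Matrix.sum_mul]
    refine Finset.sum_congr rfl fun xs _ => ?_
    rw [Matrix.mul_smul, Matrix.smul_mul]
    congr 1
    rw [hVbdef, mProd_conjTranspose, ← mProd_mul, ← mProd_mul]
  have hbb : ∀ b : (∀ i, K i), (Vbᴴ * ρ * Vb) b b
      = ∑ xs : Fin l → X, ((p xs : ℝ) : ℂ) *
        ∏ i, (((hσH i).eigenvectorUnitary : Matrix (K i) (K i) ℂ)ᴴ * W i (xs i)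
          * ((hσH i).eigenvectorUnitary : Matrix (K i) (K i) ℂ)) (b i) (b i) := by
    intro b
    rw [hVρV, Matrix.sum_apply]
    refine Finset.sum_congr rfl fun xs _ => ?_
    simp only [Matrix.smul_apply, smul_eq_mul, mProd]
  have htraceA : ∀ (xs : Fin l → X) (i' : Fin l),
      ∑ k, (((hσH i').eigenvectorUnitary : Matrix (K i') (K i') ℂ)ᴴ * W i' (xs i')
        * ((hσH i').eigenvectorUnitary : Matrix (K i') (K i') ℂ)) k k = 1 := by
    intro xs i'
    have h1 : ∑ k, (((hσH i').eigenvectorUnitary : Matrix (K i') (K i') ℂ)ᴴ * W i' (xs i')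
        * ((hσH i').eigenvectorUnitary : Matrix (K i') (K i') ℂ)) k k
        = (((hσH i').eigenvectorUnitary : Matrix (K i') (K i') ℂ)ᴴ * W i' (xs i')
        * ((hσH i').eigenvectorUnitary : Matrix (K i') (K i') ℂ)).trace := rfl
    rw [h1, Matrix.trace_mul_cycle]
    have h2 : ((hσH i').eigenvectorUnitary : Matrix (K i') (K i') ℂ)
        * ((hσH i').eigenvectorUnitary : Matrix (K i') (K i') ℂ)ᴴ = 1 := by
      have := Matrix.mem_unitaryGroup_iff.mp (hVmu i')
      rwa [Matrix.star_eq_conjTranspose] at this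
    rw [h2, one_mul]
    exact (hW i' (xs i')).2
  have hC3 : ∀ (i : Fin l) (j : K i), ∑ b : (∀ i', K i'),
      (if b i = j then (Vbᴴ * ρ * Vb) b b else 0) = (((hσH i).eigenvalues j : ℝ) : ℂ) := by
    intro i j
    calc ∑ b : (∀ i', K i'), (if b i = j then (Vbᴴ * ρ * Vb) b b else 0)
        = ∑ b : (∀ i', K i'), ∑ xs : Fin l → X, (if b i = j then ((p xs : ℝ) : ℂ) *
            ∏ i', (((hσH i').eigenvectorUnitary : Matrix (K i') (K i') ℂ)ᴴ * W i' (xs i')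
              * ((hσH i').eigenvectorUnitary : Matrix (K i') (K i') ℂ)) (b i') (b i')
            else 0) := by
          refine Finset.sum_congr rfl fun b _ => ?_
          rw [hbb b]
          split <;> simp
      _ = ∑ xs : Fin l → X, ∑ b : (∀ i', K i'), (if b i = j then ((p xs : ℝ) : ℂ) *
            ∏ i', (((hσH i').eigenvectorUnitary : Matrix (K i') (K i') ℂ)ᴴ * W i' (xs i')
              * ((hσH i').eigenvectorUnitary : Matrix (K i') (K i') ℂ)) (b i') (b i')
            else 0) := Finset.sum_comm
      _ = ∑ xs : Fin l → X, ((p xs : ℝ) : ℂ) *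
            (((hσH i).eigenvectorUnitary : Matrix (K i) (K i) ℂ)ᴴ * W i (xs i)
              * ((hσH i).eigenvectorUnitary : Matrix (K i) (K i) ℂ)) j j := by
          refine Finset.sum_congr rfl fun xs _ => ?_
          have e : ∀ b : (∀ i', K i'), (if b i = j then ((p xs : ℝ) : ℂ) *
              ∏ i', (((hσH i').eigenvectorUnitary : Matrix (K i') (K i') ℂ)ᴴ * W i' (xs i')
                * ((hσH i').eigenvectorUnitary : Matrix (K i') (K i') ℂ)) (b i') (b i')
              else 0)
              = ((p xs : ℝ) : ℂ) * (if b i = j then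
              ∏ i', (((hσH i').eigenvectorUnitary : Matrix (K i') (K i') ℂ)ᴴ * W i' (xs i')
                * ((hσH i').eigenvectorUnitary : Matrix (K i') (K i') ℂ)) (b i') (b i')
              else 0) := by
            intro b; split <;> simp
          rw [Finset.sum_congr rfl fun b _ => e b, ← Finset.mul_sum,
            sum_pi_ite (fun i' k =>
              (((hσH i').eigenvectorUnitary : Matrix (K i') (K i') ℂ)ᴴ * W i' (xs i')
                * ((hσH i').eigenvectorUnitary : Matrix (K i') (K i') ℂ)) k k) i j (htraceA xs)]
      _ = (((hσH i).eigenvectorUnitary : Matrix (K i) (K i) ℂ)ᴴ * σ i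
            * ((hσH i).eigenvectorUnitary : Matrix (K i) (K i) ℂ)) j j := by
          have h3 : ((hσH i).eigenvectorUnitary : Matrix (K i) (K i) ℂ)ᴴ * σ i
              * ((hσH i).eigenvectorUnitary : Matrix (K i) (K i) ℂ)
              = ∑ xs : Fin l → X, ((p xs : ℝ) : ℂ) •
              (((hσH i).eigenvectorUnitary : Matrix (K i) (K i) ℂ)ᴴ * W i (xs i)
                * ((hσH i).eigenvectorUnitary : Matrix (K i) (K i) ℂ)) := by
            symm
            calc ∑ xs : Fin l → X, ((p xs : ℝ) : ℂ) •
                (((hσH i).eigenvectorUnitary : Matrix (K i) (K i) ℂ)ᴴ * W i (xs i)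
                  * ((hσH i).eigenvectorUnitary : Matrix (K i) (K i) ℂ))
                = ((hσH i).eigenvectorUnitary : Matrix (K i) (K i) ℂ)ᴴ *
                  (∑ xs : Fin l → X, ((p xs : ℝ) : ℂ) • W i (xs i)) *
                  ((hσH i).eigenvectorUnitary : Matrix (K i) (K i) ℂ) := by
                  rw [Matrix.mul_sum, Matrix.sum_mul]
                  refine Finset.sum_congr rfl fun xs _ => ?_
                  rw [Matrix.mul_smul, Matrix.smul_mul]
              _ = ((hσH i).eigenvectorUnitary : Matrix (K i) (K i) ℂ)ᴴ * σ i *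
                  ((hσH i).eigenvectorUnitary : Matrix (K i) (K i) ℂ) := by
                  rw [← hσ_regroup i]
          rw [h3, Matrix.sum_apply]
          refine Finset.sum_congr rfl fun xs _ => ?_
          simp only [Matrix.smul_apply, smul_eq_mul]
      _ = (((hσH i).eigenvalues j : ℝ) : ℂ) := by
          rw [hdiag i, Matrix.diagonal_apply_eq]
  have hfib : ∀ (i : Fin l) (j : K i), ∑ b : (∀ i', K i'),
      (if b i = j then ((Vbᴴ * ρ * Vb) b b).re else 0) = (hσH i).eigenvalues j := by
    intro i j
    have h := congrArg Complex.re (hC3 i j)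
    rw [Complex.re_sum] at h
    simpa [apply_ite Complex.re] using h
  have hr0 : ∀ b : (∀ i, K i), 0 ≤ ((Vbᴴ * ρ * Vb) b b).re :=
    fun b => psd_diag_re_nonneg (hρ_psd.conjTranspose_mul_mul_same Vb) b
  have hsupp : ∀ b : (∀ i, K i), (∏ i, (hσH i).eigenvalues (b i)) = 0 →
      ((Vbᴴ * ρ * Vb) b b).re = 0 := by
    intro b h0
    obtain ⟨i, -, hi⟩ := Finset.prod_eq_zero_iff.mp h0
    have h1 : ∑ b' : (∀ i', K i'),
        (if b' i = b i then ((Vbᴴ * ρ * Vb) b' b').re else 0) = 0 := by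
      rw [hfib i (b i)]; exact hi
    have h2 := (Finset.sum_eq_zero_iff_of_nonneg fun b' _ => by
      by_cases hc : b' i = b i
      · simp only [hc, if_true]; exact hr0 b'
      · simp [hc]).mp h1 b (Finset.mem_univ b)
    simpa using h2
  have hq0 : ∀ b : (∀ i, K i), 0 ≤ ∏ i, (hσH i).eigenvalues (b i) :=
    fun b => Finset.prod_nonneg fun i _ => (hσ_psd i).eigenvalues_nonneg (b i)
  have hq1 : ∑ b : (∀ i, K i), ∏ i, (hσH i).eigenvalues (b i) = 1 := by
    rw [sum_pi_prod]
    exact Finset.prod_eq_one fun i _ => sum_eigenvalues_eq_one (hσH i) (hσ_tr i)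
  have hklein := klein hρ_psd hρ_tr hVbu hq0 hq1 hsupp
  -- the conditional entropy sum equals the sum of the σ entropies
  have hF8 : -∑ b : (∀ i, K i), ((Vbᴴ * ρ * Vb) b b).re
      * Real.logb 2 (∏ i, (hσH i).eigenvalues (b i)) = ∑ i, vN (σ i) := by
    have step1 : ∀ b : (∀ i, K i), ((Vbᴴ * ρ * Vb) b b).re
        * Real.logb 2 (∏ i, (hσH i).eigenvalues (b i))
        = ∑ i, Real.logb 2 ((hσH i).eigenvalues (b i)) * ((Vbᴴ * ρ * Vb) b b).re := by
      intro b
      by_cases hz : ∀ i, (hσH i).eigenvalues (b i) ≠ 0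
      · rw [logb_prod _ _ fun i _ => hz i, mul_comm, Finset.sum_mul]
      · push_neg at hz
        obtain ⟨i0, hi0⟩ := hz
        rw [hsupp b (Finset.prod_eq_zero (Finset.mem_univ i0) hi0)]
        simp
    rw [Finset.sum_congr rfl fun b _ => step1 b, Finset.sum_comm]
    have step2 : ∀ i, ∑ b : (∀ i', K i'),
        Real.logb 2 ((hσH i).eigenvalues (b i)) * ((Vbᴴ * ρ * Vb) b b).re
        = ∑ j, (hσH i).eigenvalues j * Real.logb 2 ((hσH i).eigenvalues j) := by
      intro i
      rw [sum_fiber (fun b => ((Vbᴴ * ρ * Vb) b b).re) i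
        (fun j => Real.logb 2 ((hσH i).eigenvalues j))]
      refine Finset.sum_congr rfl fun j _ => ?_
      rw [hfib i j]; ring
    rw [Finset.sum_congr rfl fun i (_ : i ∈ Finset.univ) => step2 i]
    have hvN : ∀ i, vN (σ i) = -∑ j, (hσH i).eigenvalues j
        * Real.logb 2 ((hσH i).eigenvalues j) := fun i => by rw [vN, dif_pos (hσH i)]
    rw [Finset.sum_congr rfl fun i (_ : i ∈ Finset.univ) => hvN i, Finset.sum_neg_distrib]
  have hklein2 : vN ρ ≤ ∑ i, vN (σ i) := by rw [← hF8]; exact hklein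
  -- second part of the Holevo quantity
  have hF10 : ∀ i, ∑ xs : Fin l → X, p xs * vN (W i (xs i))
      = ∑ x, pm i x * vN (W i x) := by
    intro i
    symm
    calc ∑ x, pm i x * vN (W i x)
        = ∑ x, ∑ xs : Fin l → X, (if xs i = x then p xs * vN (W i x) else 0) := by
          refine Finset.sum_congr rfl fun x _ => ?_
          simp only [hpm]
          rw [Finset.sum_mul]
          exact Finset.sum_congr rfl fun xs _ => by split <;> simp
      _ = ∑ xs : Fin l → X, ∑ x, (if xs i = x then p xs * vN (W i x) else 0) :=
          Finset.sum_comm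
      _ = ∑ xs : Fin l → X, p xs * vN (W i (xs i)) := by
          refine Finset.sum_congr rfl fun xs _ => ?_
          simp [Finset.sum_ite_eq]
  have h2 : ∑ xs : Fin l → X, p xs * vN (mProd fun i => W i (xs i))
      = ∑ i, ∑ x, pm i x * vN (W i x) := by
    calc ∑ xs : Fin l → X, p xs * vN (mProd fun i => W i (xs i))
        = ∑ xs : Fin l → X, ∑ i, p xs * vN (W i (xs i)) := by
          refine Finset.sum_congr rfl fun xs _ => ?_
          rw [vN_mProd _ (fun i => (hW i (xs i)).1) (fun i => (hW i (xs i)).2),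
            Finset.mul_sum]
      _ = ∑ i, ∑ xs : Fin l → X, p xs * vN (W i (xs i)) := Finset.sum_comm
      _ = ∑ i, ∑ x, pm i x * vN (W i x) := Finset.sum_congr rfl fun i _ => hF10 i
  -- assemble
  have hL : holevo p (fun xs : Fin l → X => mProd (fun i => W i (xs i)))
      = vN ρ - ∑ xs : Fin l → X, p xs * vN (mProd fun i => W i (xs i)) := by
    simp only [holevo]; rfl
  have hR : ∀ i, holevo (fun x : X => ∑ xs : Fin l → X, if xs i = x then p xs else 0) (W i)
      = vN (σ i) - ∑ x, pm i x * vN (W i x) := by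
    intro i
    simp only [holevo, hσdef, hpm]
  rw [hL, Finset.sum_congr rfl fun i (_ : i ∈ Finset.univ) => hR i,
    Finset.sum_sub_distrib, h2]
  exact sub_le_sub_right hklein2 _


end
end

section
/- (Auxiliary alphabet reduction for the ccq-MAC, via Lemma 3 of Ahlswede–Körner.) Let W : X × Y → S(K) be a ccq-MAC, let U' be a finite set, and let p'(u',x,y) = q'(u') r'(x|u') s'(y|u') be a distribution on U' × X × Y. Then there exist a finite set U with |U| ≤ |X|·|Y| + 3 and a distribution p(u,x,y) = q(u) r(x|u) s(y|u) on U × X × Y such that the induced marginal distribution on X × Y is unchanged (∑_u q(u) r(x|u) s(y|u) = ∑_{u'} q'(u') r'(x|u') s'(y|u') for all (x,y)) and the four quantities coincide: χ(X;Q|Y,U) = χ(X';Q'|Y',U'), χ(Y;Q|X,U) = χ(Y';Q'|X',U'), χ(X,Y;Q|U) = χ(X',Y';Q'|U'), and χ(X,Y;Q) = χ(X',Y';Q'), where primed quantities are evaluated with respect to p' and unprimed ones with respect to p. -/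
open scoped BigOperators Kronecker ComplexOrder
open Matrix Filter

noncomputable section

/-- Auxiliary: a product-conditional distribution has total mass 1 on `X × Y`. -/
private lemma aux_total_sum {V X Y : Type*} [Fintype V] [Fintype X] [Fintype Y]
    (qq : V → ℝ) (rr : V → X → ℝ) (ss : V → Y → ℝ)
    (hq : ∑ v, qq v = 1) (hr : ∀ v, ∑ x, rr v x = 1) (hs : ∀ v, ∑ y, ss v y = 1) :
    ∑ p : X × Y, (∑ v, qq v * rr v p.1 * ss v p.2) = 1 := by
  rw [Finset.sum_comm]
  have h1 : ∀ v, ∑ p : X × Y, qq v * rr v p.1 * ss v p.2 = qq v := by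
    intro v
    rw [Fintype.sum_prod_type]
    have h2 : ∀ x, ∑ y, qq v * rr v x * ss v y = qq v * rr v x := by
      intro x
      rw [← Finset.mul_sum, hs v, mul_one]
    rw [Finset.sum_congr rfl fun x _ => h2 x, ← Finset.mul_sum, hr v, mul_one]
  rw [Finset.sum_congr rfl fun v _ => h1 v, hq]

/-- **Auxiliary alphabet reduction** (via Lemma 3 of Ahlswede–Körner): any input
distribution `q'(u') r'(x|u') s'(y|u')` on `U' × X × Y` can be replaced by one on an
alphabet `U` with `|U| ≤ |X|·|Y| + 3` without changing the induced distribution on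
`X × Y` or any of the four Holevo information quantities. -/
theorem alphabet_reduction {X Y U' : Type*} [Fintype X] [Fintype Y] [Fintype U'] {d : ℕ}
    (W : X → Y → Matrix (Fin d) (Fin d) ℂ) (hW : ∀ x y, IsState (W x y))
    (q' : U' → ℝ) (r' : U' → X → ℝ) (s' : U' → Y → ℝ)
    (hq' : IsProb q') (hr' : ∀ u, IsProb (r' u)) (hs' : ∀ u, IsProb (s' u)) :
    ∃ nU : ℕ, nU ≤ Fintype.card X * Fintype.card Y + 3 ∧
    ∃ (q : Fin nU → ℝ) (r : Fin nU → X → ℝ) (s : Fin nU → Y → ℝ),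
      IsProb q ∧ (∀ u, IsProb (r u)) ∧ (∀ u, IsProb (s u)) ∧
      (∀ x y, ∑ u, q u * r u x * s u y = ∑ u, q' u * r' u x * s' u y) ∧
      chiXQYU W q r s = chiXQYU W q' r' s' ∧
      chiYQXU W q r s = chiYQXU W q' r' s' ∧
      chiXYQU W q r s = chiXYQU W q' r' s' ∧
      chiXYQ W q r s = chiXYQ W q' r' s' := by
  classical
  -- nonemptiness
  have hU' : Nonempty U' := by
    by_contra h
    rw [not_nonempty_iff] at h
    have := hq'.2
    simp [Finset.univ_eq_empty] at this
  obtain ⟨u₀⟩ := hU'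
  have hX : Nonempty X := by
    by_contra h
    rw [not_nonempty_iff] at h
    have := (hr' u₀).2
    simp [Finset.univ_eq_empty] at this
  have hY : Nonempty Y := by
    by_contra h
    rw [not_nonempty_iff] at h
    have := (hs' u₀).2
    simp [Finset.univ_eq_empty] at this
  obtain ⟨x₀⟩ := hX
  obtain ⟨y₀⟩ := hY
  set xy₀ : X × Y := (x₀, y₀) with hxy₀
  -- the embedding into a space of dimension |X||Y|+2
  set A : U' → ℝ := fun u => ∑ y, s' u y * holevo (r' u) (fun x => W x y) with hA
  set B : U' → ℝ := fun u => ∑ x, r' u x * holevo (s' u) (fun y => W x y) with hB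
  set Cq : U' → ℝ := fun u =>
    holevo (fun xy : X × Y => r' u xy.1 * s' u xy.2) (fun xy : X × Y => W xy.1 xy.2) with hCq
  set F : U' → (({xy : X × Y // xy ≠ xy₀} ⊕ Fin 3) → ℝ) := fun u =>
    Sum.elim (fun xy => r' u xy.1.1 * s' u xy.1.2) (fun j => ![A u, B u, Cq u] j) with hF
  have hmem : ∑ u, q' u • F u ∈ convexHull ℝ (Set.range F) := by
    have h1 : ∑ u ∈ Finset.univ, q' u = 1 := hq'.2
    have h2 := Finset.centerMass_mem_convexHull (Finset.univ) (fun i _ => hq'.1 i)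
      (by rw [h1]; norm_num) (fun i _ => Set.mem_range_self (f := F) i)
    rwa [Finset.centerMass_eq_of_sum_1 _ _ h1] at h2
  obtain ⟨ιc, fι, z, w, hrange, hai, hwpos, hwsum, hwz⟩ :=
    eq_pos_convex_span_of_mem_convexHull hmem
  letI := fι
  have hz : ∀ i, ∃ u, F u = z i := fun i => hrange (Set.mem_range_self i)
  choose g hg using hz
  -- cardinality bound
  have hcard : Fintype.card ιc ≤ Fintype.card X * Fintype.card Y + 3 := by
    have h1 := hai.card_le_finrank_succ
    have h2 : Module.finrank ℝ (vectorSpan ℝ (Set.range z)) ≤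
        Module.finrank ℝ (({xy : X × Y // xy ≠ xy₀} ⊕ Fin 3) → ℝ) :=
      Submodule.finrank_le _
    have h3 : Module.finrank ℝ (({xy : X × Y // xy ≠ xy₀} ⊕ Fin 3) → ℝ) =
        Fintype.card ({xy : X × Y // xy ≠ xy₀} ⊕ Fin 3) :=
      Module.finrank_fintype_fun_eq_card ℝ
    have h4 : Fintype.card ({xy : X × Y // xy ≠ xy₀} ⊕ Fin 3) =
        (Fintype.card (X × Y) - 1) + 3 := by
      rw [Fintype.card_sum, Fintype.card_fin]
      congr 1
      have h4a : Fintype.card {xy : X × Y // xy ≠ xy₀} =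
          Fintype.card (X × Y) - Fintype.card {xy : X × Y // xy = xy₀} :=
        Fintype.card_subtype_compl _
      rw [h4a, Fintype.card_subtype_eq]
    have h5 : 1 ≤ Fintype.card (X × Y) := @Fintype.card_pos _ _ ⟨xy₀⟩
    have h6 : Fintype.card (X × Y) = Fintype.card X * Fintype.card Y := Fintype.card_prod _ _
    omega
  set e : Fin (Fintype.card ιc) ≃ ιc := (Fintype.equivFin ιc).symm with he
  set qn : Fin (Fintype.card ιc) → ℝ := fun i => w (e i) with hqn
  set rn : Fin (Fintype.card ιc) → X → ℝ := fun i => r' (g (e i)) with hrn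
  set sn : Fin (Fintype.card ιc) → Y → ℝ := fun i => s' (g (e i)) with hsn
  -- the key coordinatewise identity
  have key : ∀ j : ({xy : X × Y // xy ≠ xy₀} ⊕ Fin 3),
      ∑ i, qn i * F (g (e i)) j = ∑ u, q' u * F u j := by
    intro j
    have h1 : ∑ i, qn i * F (g (e i)) j = ∑ i : ιc, w i * F (g i) j :=
      Fintype.sum_equiv e _ _ (fun i => rfl)
    rw [h1]
    have h2 : ∑ i : ιc, w i * F (g i) j = ∑ i : ιc, w i * z i j := by
      refine Finset.sum_congr rfl fun i _ => ?_
      rw [hg i]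
    rw [h2]
    have h3 : ∑ i : ιc, w i * z i j = (∑ i : ιc, w i • z i) j := by
      rw [Finset.sum_apply]; rfl
    rw [h3, hwz, Finset.sum_apply]
    rfl
  have hIsq : IsProb qn := by
    refine ⟨fun i => (hwpos _).le, ?_⟩
    rw [← hwsum]
    exact Fintype.sum_equiv e _ _ (fun i => rfl)
  -- marginal equality
  have hmarg : ∀ x y, ∑ u, qn u * rn u x * sn u y = ∑ u, q' u * r' u x * s' u y := by
    have hoff : ∀ p : X × Y, p ≠ xy₀ →
        ∑ u, qn u * rn u p.1 * sn u p.2 = ∑ u, q' u * r' u p.1 * s' u p.2 := by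
      intro p hp
      have := key (Sum.inl ⟨p, hp⟩)
      simp only [hF, Sum.elim_inl, hrn, hsn] at this ⊢
      calc ∑ u, qn u * r' (g (e u)) p.1 * s' (g (e u)) p.2
          = ∑ u, qn u * (r' (g (e u)) p.1 * s' (g (e u)) p.2) := by
            refine Finset.sum_congr rfl fun u _ => by ring
        _ = ∑ u, q' u * (r' u p.1 * s' u p.2) := this
        _ = ∑ u, q' u * r' u p.1 * s' u p.2 := by
            refine Finset.sum_congr rfl fun u _ => by ring
    intro x y
    by_cases hp : (x, y) = xy₀
    · -- use that both marginals sum to 1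
      have ht1 : ∑ p : X × Y, (∑ u, qn u * rn u p.1 * sn u p.2) = 1 :=
        aux_total_sum qn rn sn hIsq.2
          (fun v => by simp only [hrn]; exact (hr' _).2)
          (fun v => by simp only [hsn]; exact (hs' _).2)
      have ht2 : ∑ p : X × Y, (∑ u, q' u * r' u p.1 * s' u p.2) = 1 :=
        aux_total_sum q' r' s' hq'.2 (fun v => (hr' v).2) (fun v => (hs' v).2)
      have hmem0 : xy₀ ∈ (Finset.univ : Finset (X × Y)) := Finset.mem_univ _
      rw [← Finset.add_sum_erase _ _ hmem0] at ht1 ht2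
      have herase : ∑ p ∈ Finset.univ.erase xy₀, (∑ u, qn u * rn u p.1 * sn u p.2)
          = ∑ p ∈ Finset.univ.erase xy₀, (∑ u, q' u * r' u p.1 * s' u p.2) :=
        Finset.sum_congr rfl fun p hpm => hoff p (Finset.ne_of_mem_erase hpm)
      have hgoal : ∑ u, qn u * rn u (x, y).1 * sn u (x, y).2
          = ∑ u, q' u * r' u (x, y).1 * s' u (x, y).2 := by
        rw [hp]
        linarith
      exact hgoal
    · exact hoff (x, y) hp
  -- the three conditional Holevo equalities, from coordinates inr 0, inr 1, inr 2
  have hF0 : ∀ u, F u (Sum.inr 0) = A u := fun u => rfl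
  have hF1 : ∀ u, F u (Sum.inr 1) = B u := fun u => rfl
  have hF2 : ∀ u, F u (Sum.inr 2) = Cq u := fun u => rfl
  have hchi1 : chiXQYU W qn rn sn = chiXQYU W q' r' s' := by
    have hL : chiXQYU W qn rn sn = ∑ i, qn i * A (g (e i)) := by
      unfold chiXQYU
      refine Finset.sum_congr rfl fun u _ => ?_
      rw [hA, Finset.mul_sum]
      refine Finset.sum_congr rfl fun y _ => by simp only [hrn, hsn]; ring
    have hR : chiXQYU W q' r' s' = ∑ u, q' u * A u := by
      unfold chiXQYU
      refine Finset.sum_congr rfl fun u _ => ?_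
      rw [hA, Finset.mul_sum]
      refine Finset.sum_congr rfl fun y _ => by ring
    rw [hL, hR]
    have hk := key (Sum.inr 0)
    simp only [hF0] at hk
    exact hk
  have hchi2 : chiYQXU W qn rn sn = chiYQXU W q' r' s' := by
    have hL : chiYQXU W qn rn sn = ∑ i, qn i * B (g (e i)) := by
      unfold chiYQXU
      refine Finset.sum_congr rfl fun u _ => ?_
      rw [hB, Finset.mul_sum]
      refine Finset.sum_congr rfl fun x _ => by simp only [hrn, hsn]; ring
    have hR : chiYQXU W q' r' s' = ∑ u, q' u * B u := by
      unfold chiYQXU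
      refine Finset.sum_congr rfl fun u _ => ?_
      rw [hB, Finset.mul_sum]
      refine Finset.sum_congr rfl fun x _ => by ring
    rw [hL, hR]
    have hk := key (Sum.inr 1)
    simp only [hF1] at hk
    exact hk
  have hchi3 : chiXYQU W qn rn sn = chiXYQU W q' r' s' := by
    have hL : chiXYQU W qn rn sn = ∑ i, qn i * Cq (g (e i)) := by
      unfold chiXYQU
      exact Finset.sum_congr rfl fun u _ => by rw [hCq]
    have hR : chiXYQU W q' r' s' = ∑ u, q' u * Cq u := by
      unfold chiXYQU
      exact Finset.sum_congr rfl fun u _ => by rw [hCq]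
    rw [hL, hR]
    have hk := key (Sum.inr 2)
    simp only [hF2] at hk
    exact hk
  have hchi4 : chiXYQ W qn rn sn = chiXYQ W q' r' s' := by
    unfold chiXYQ
    congr 1
    funext xy
    exact hmarg xy.1 xy.2
  exact ⟨Fintype.card ιc, hcard, qn, rn, sn, hIsq, fun u => hr' _, fun u => hs' _,
    hmarg, hchi1, hchi2, hchi3, hchi4⟩

end
end
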